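/- Let G and H be finite connected simple graphs, let W1 and W2 be weight functions on G and H respectively, and define the weight function W1 × W2 on the Cartesian (box) product graph G □ H by (W1 × W2)(g,h) = W1(g)·W2(h). Then for every vertex (g,h) of G □ H, Σ_{(g*,h*) ∈ V(G □ H)} (W1 × W2)(g*,h*) · 2^{d((g,h),(g*,h*))} = (Σ_{g* ∈ V(G)} W1(g*) · 2^{d(g,g*)}) · (Σ_{h* ∈ V(H)} W2(h*) · 2^{d(h,h*)}); consequently SN_{W1 × W2}(G □ H) = SN_{W1}(G) · SN_{W2}(H). -/

import Mathlib

/-- A single pebbling move on graph `G`: remove two pebbles from a vertex `p`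
(which must carry at least two pebbles) and add one pebble to an adjacent vertex `q`. -/
def PebblingMove {V : Type*} (G : SimpleGraph V) (D D' : V → ℕ) : Prop :=
  ∃ p q : V, G.Adj p q ∧ 2 ≤ D p ∧
    D' p = D p - 2 ∧ D' q = D q + 1 ∧ ∀ s : V, s ≠ p → s ≠ q → D' s = D s

/-- `D'` is derivable from `D` by a (possibly empty) finite sequence of pebbling moves. -/
def Derivable {V : Type*} (G : SimpleGraph V) (D D' : V → ℕ) : Prop :=
  Relation.ReflTransGen (PebblingMove G) D D'

/-- `D` covers `W` if some distribution derivable from `D` contains `W`. -/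
def Covers {V : Type*} (G : SimpleGraph V) (D W : V → ℕ) : Prop :=
  ∃ D' : V → ℕ, Derivable G D D' ∧ ∀ q : V, W q ≤ D' q

/-- The standard value `V_S(D) = ∑_q D(q) · 2^{d(q,S)}`, where
`d(q,S) = min_{r ∈ S} d(q,r)`. -/
noncomputable def stdVal {V : Type*} [Fintype V] (G : SimpleGraph V) (S : Set V)
    (D : V → ℕ) : ℕ :=
  ∑ q : V, D q * 2 ^ sInf {d : ℕ | ∃ r ∈ S, G.dist q r = d}

/-- The stacking number `SN_W(G) = max_v ∑_u W(u) · 2^{d(u,v)}`. -/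
noncomputable def SN {V : Type*} [Fintype V] (G : SimpleGraph V) (W : V → ℕ) : ℕ :=
  Finset.univ.sup fun v : V => ∑ u : V, W u * 2 ^ G.dist u v

private lemma length_subst {α : Type*} {G : SimpleGraph α} {u v w : α} (h : u = v)
    (p : G.Walk v w) : (h ▸ p : G.Walk u w).length = p.length := by subst h; rfl

private lemma ofBoxProd_length {α β : Type*} [DecidableEq α] [DecidableEq β]
    {G : SimpleGraph α} {H : SimpleGraph β} [DecidableRel G.Adj] [DecidableRel H.Adj]
    {x y : α × β} (w : (G □ H).Walk x y) :
    w.ofBoxProdLeft.length + w.ofBoxProdRight.length ≤ w.length := by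
  induction w with
  | nil => simp [SimpleGraph.Walk.ofBoxProdLeft, SimpleGraph.Walk.ofBoxProdRight]
  | @cons x y z h w ih =>
    rw [SimpleGraph.Walk.ofBoxProdLeft, SimpleGraph.Walk.ofBoxProdRight]
    unfold Or.by_cases
    rw [SimpleGraph.Walk.length_cons]
    split_ifs with h1 h2 h2
    · exact absurd (h1.2 ▸ h2.1) (H.irrefl)
    · rw [SimpleGraph.Walk.length_cons, length_subst ((Or.symm h).resolve_left h2).2]; omega
    · rw [SimpleGraph.Walk.length_cons, length_subst (h.resolve_left h1).2]; omega
    · rcases h with ⟨hg, he⟩ | ⟨hh, he⟩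
      · exact absurd ⟨hg, he⟩ h1
      · exact absurd ⟨hh, he⟩ h2

lemma boxProd_dist {α β : Type*} {G : SimpleGraph α} {H : SimpleGraph β}
    (hG : G.Connected) (hH : H.Connected) (x y : α × β) :
    (G □ H).dist x y = G.dist x.1 y.1 + H.dist x.2 y.2 := by
  classical
  apply le_antisymm
  · obtain ⟨p, hp⟩ := hG.exists_walk_length_eq_dist x.1 y.1
    obtain ⟨q, hq⟩ := hH.exists_walk_length_eq_dist x.2 y.2
    have := SimpleGraph.dist_le ((p.boxProdLeft H x.2).append (q.boxProdRight G y.1))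
    refine this.trans (le_of_eq ((SimpleGraph.Walk.length_append _ _).trans ?_))
    exact congrArg₂ (· + ·) ((SimpleGraph.Walk.length_map _ _).trans hp)
      ((SimpleGraph.Walk.length_map _ _).trans hq)
  · obtain ⟨w, hw⟩ := (hG.boxProd hH).exists_walk_length_eq_dist x y
    calc G.dist x.1 y.1 + H.dist x.2 y.2
        ≤ w.ofBoxProdLeft.length + w.ofBoxProdRight.length :=
          Nat.add_le_add (SimpleGraph.dist_le _) (SimpleGraph.dist_le _)
      _ ≤ w.length := ofBoxProd_length w
      _ = _ := hw

/-- Product formula for stacking numbers on the Cartesian (box) product. -/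
theorem SN_boxProd {α β : Type*} [Fintype α] [Fintype β]
    (G : SimpleGraph α) (H : SimpleGraph β) (hG : G.Connected) (hH : H.Connected)
    (W1 : α → ℕ) (W2 : β → ℕ) :
    (∀ g : α, ∀ h : β,
      (∑ p : α × β, (W1 p.1 * W2 p.2) * 2 ^ (G □ H).dist (g, h) p) =
        (∑ g' : α, W1 g' * 2 ^ G.dist g g') * (∑ h' : β, W2 h' * 2 ^ H.dist h h')) ∧
    SN (G □ H) (fun p : α × β => W1 p.1 * W2 p.2) = SN G W1 * SN H W2 := by
  have key : ∀ g : α, ∀ h : β,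
      (∑ p : α × β, (W1 p.1 * W2 p.2) * 2 ^ (G □ H).dist (g, h) p) =
        (∑ g' : α, W1 g' * 2 ^ G.dist g g') * (∑ h' : β, W2 h' * 2 ^ H.dist h h') := by
    intro g h
    rw [Finset.sum_mul_sum, Fintype.sum_prod_type]
    refine Finset.sum_congr rfl fun g' _ => Finset.sum_congr rfl fun h' _ => ?_
    rw [boxProd_dist hG hH (g, h) (g', h'), pow_add]
    ring
  refine ⟨key, ?_⟩
  have hdc : ∀ (u v : α), G.dist u v = G.dist v u := fun u v => SimpleGraph.dist_comm
  have hdcH : ∀ (u v : β), H.dist u v = H.dist v u := fun u v => SimpleGraph.dist_comm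
  have key' : ∀ p : α × β,
      (∑ u : α × β, (W1 u.1 * W2 u.2) * 2 ^ (G □ H).dist u p) =
        (∑ g' : α, W1 g' * 2 ^ G.dist g' p.1) * (∑ h' : β, W2 h' * 2 ^ H.dist h' p.2) := by
    intro p
    have := key p.1 p.2
    simp only [SimpleGraph.dist_comm (G := G □ H) (u := (p.1, p.2))] at this
    calc (∑ u : α × β, (W1 u.1 * W2 u.2) * 2 ^ (G □ H).dist u p)
        = (∑ u : α × β, (W1 u.1 * W2 u.2) * 2 ^ (G □ H).dist (p.1, p.2) u) := by
          refine Finset.sum_congr rfl fun u _ => ?_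
          rw [SimpleGraph.dist_comm]
      _ = (∑ g' : α, W1 g' * 2 ^ G.dist p.1 g') * (∑ h' : β, W2 h' * 2 ^ H.dist p.2 h') :=
          key p.1 p.2
      _ = _ := by
          congr 1 <;> refine Finset.sum_congr rfl fun u _ => ?_ <;> rw [SimpleGraph.dist_comm]
  haveI : Nonempty α := hG.nonempty
  haveI : Nonempty β := hH.nonempty
  unfold SN
  set A : α → ℕ := fun v => ∑ u : α, W1 u * 2 ^ G.dist u v with hA
  set B : β → ℕ := fun v => ∑ u : β, W2 u * 2 ^ H.dist u v with hB
  have hval : ∀ p : α × β,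
      (∑ u : α × β, (W1 u.1 * W2 u.2) * 2 ^ (G □ H).dist u p) = A p.1 * B p.2 := key'
  apply le_antisymm
  · refine Finset.sup_le fun p _ => ?_
    rw [hval p]
    exact Nat.mul_le_mul (Finset.le_sup (Finset.mem_univ p.1))
      (Finset.le_sup (Finset.mem_univ p.2))
  · obtain ⟨g₀, _, hg₀⟩ := Finset.exists_mem_eq_sup Finset.univ Finset.univ_nonempty A
    obtain ⟨h₀, _, hh₀⟩ := Finset.exists_mem_eq_sup Finset.univ Finset.univ_nonempty B
    calc (Finset.univ.sup A) * (Finset.univ.sup B) = A g₀ * B h₀ := by rw [hg₀, hh₀]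
      _ = _ := (hval (g₀, h₀)).symm
      _ ≤ _ := Finset.le_sup
          (f := fun v : α × β => ∑ u : α × β, (W1 u.1 * W2 u.2) * 2 ^ (G □ H).dist u v)
          (Finset.mem_univ (g₀, h₀))
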